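/- arXiv:1502.01144 — 7 statements merged into one kernel-verified Lean document; each statement's English description precedes it below -/
import Mathlib

section
/- Let N = [[0, 1, 0], [-3, 0, 5], [-4, 0, 6]] be a real 3×3 matrix and v₀ = (0, 0, 1)ᵗ. Then the sequence n ↦ |(Nⁿ·v₀)₃|^{1/n}, where (Nⁿ·v₀)₃ denotes the third coordinate of Nⁿ·v₀, converges to (5 + √33)/2 as n → ∞. -/
open Filter Matrix

/-- The exponential growth rate of the third coordinate of `Nⁿ·(0,0,1)ᵗ` for
`N = [[0,1,0],[-3,0,5],[-4,0,6]]` is the dominant eigenvalue `(5 + √33)/2`. -/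
theorem stmt_6 (N : Matrix (Fin 3) (Fin 3) ℝ)
    (hN : N = !![0, 1, 0; -3, 0, 5; -4, 0, 6])
    (v0 : Fin 3 → ℝ) (hv0 : v0 = ![0, 0, 1]) :
    Tendsto (fun n : ℕ => |((N ^ n).mulVec v0) 2| ^ ((1 : ℝ) / n))
      atTop (nhds ((5 + Real.sqrt 33) / 2)) := by
  subst hN hv0
  set s : ℝ := Real.sqrt 33 with hs_def
  have hs2 : s ^ 2 = 33 := Real.sq_sqrt (by norm_num)
  have hs5 : 5 < s := by
    rw [hs_def]
    exact (Real.lt_sqrt (by norm_num)).2 (by norm_num)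
  have hs6 : s < 6 := by nlinarith
  set l : ℝ := (5 + s) / 2 with hl_def
  set m : ℝ := (5 - s) / 2 with hm_def
  have hl1 : 1 < l := by rw [hl_def]; nlinarith
  have hl0 : 0 < l := by linarith
  have hl2 : l ^ 2 = 5 * l + 2 := by rw [hl_def]; linear_combination hs2 / 4
  have hm2 : m ^ 2 = 5 * m + 2 := by rw [hm_def]; linear_combination hs2 / 4
  set a : ℝ := (s - 3) / (12 * s) with ha_def
  set b : ℝ := (s + 3) / (12 * s) with hb_def
  have hsne : s ≠ 0 := by positivity
  have hab1 : a + b = 1 / 6 := by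
    rw [ha_def, hb_def]; field_simp; ring
  have hab2 : a * l + b * m = 1 / 6 := by
    rw [ha_def, hb_def, hl_def, hm_def]; field_simp; ring
  -- closed form for the iterates
  have key : ∀ n : ℕ, ((!![0, 1, 0; -3, 0, 5; -4, 0, 6] : Matrix (Fin 3) (Fin 3) ℝ) ^ n).mulVec ![0, 0, 1] =
      ![5 * a * l ^ n + 5 * b * m ^ n - 5 / 6,
        5 * a * l * l ^ n + 5 * b * m * m ^ n - 5 / 6,
        a * (l ^ 2 + 3) * l ^ n + b * (m ^ 2 + 3) * m ^ n - 2 / 3] := by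
    intro n
    induction n with
    | zero =>
      simp only [pow_zero, Matrix.one_mulVec]
      funext i
      fin_cases i <;> simp
      · linear_combination (-5 : ℝ) * hab1
      · linear_combination (-5 : ℝ) * hab2
      · linear_combination (-a) * hl2 + (-b) * hm2 + (-5 : ℝ) * hab1 + (-5 : ℝ) * hab2
    | succ n ih =>
      rw [pow_succ', ← Matrix.mulVec_mulVec, ih]
      funext i
      fin_cases i <;>
        simp [Matrix.mulVec, dotProduct, Fin.sum_univ_three]
      · ring
      · ring
      · linear_combination (a * l ^ n * (1 - l)) * hl2 + (b * m ^ n * (1 - m)) * hm2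
  set A : ℝ := a * (l ^ 2 + 3) with hA_def
  set B : ℝ := b * (m ^ 2 + 3) with hB_def
  have hApos : 0 < A := by
    have ha0 : 0 < a := by
      rw [ha_def]; exact div_pos (by nlinarith) (by nlinarith)
    have : 0 < l ^ 2 + 3 := by positivity
    rw [hA_def]; exact mul_pos ha0 this
  set r : ℕ → ℝ := fun n => A + B * (m / l) ^ n + (-2 / 3) * (1 / l) ^ n with hr_def
  have hz : ∀ n : ℕ, l ^ n * r n =
      a * (l ^ 2 + 3) * l ^ n + b * (m ^ 2 + 3) * m ^ n - 2 / 3 := by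
    intro n
    have hln : l ^ n ≠ 0 := pow_ne_zero _ (ne_of_gt hl0)
    have hl : l ≠ 0 := ne_of_gt hl0
    rw [hr_def, hA_def, hB_def]
    simp only [div_pow, one_pow]
    field_simp
    ring
  -- limits
  have hml : |m / l| < 1 := by
    rw [abs_lt]
    constructor
    · rw [lt_div_iff₀ hl0]; nlinarith
    · rw [div_lt_one hl0]; nlinarith
  have hil : |1 / l| < 1 := by
    rw [abs_of_pos (by positivity), div_lt_one hl0]; linarith
  have hr_lim : Tendsto r atTop (nhds A) := by
    have h1 := tendsto_pow_atTop_nhds_zero_of_abs_lt_one hml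
    have h2 := tendsto_pow_atTop_nhds_zero_of_abs_lt_one hil
    have h3 : Tendsto (fun n : ℕ => A + B * (m / l) ^ n + (-2 / 3) * (1 / l) ^ n)
        atTop (nhds (A + B * 0 + (-2 / 3) * 0)) :=
      ((tendsto_const_nhds.add (h1.const_mul B)).add (h2.const_mul (-2 / 3)))
    simpa only [mul_zero, add_zero] using h3
  have habs : Tendsto (fun n => |r n|) atTop (nhds |A|) := hr_lim.abs
  have hrpow : Tendsto (fun n : ℕ => |r n| ^ ((1 : ℝ) / n)) atTop (nhds 1) := by
    have := habs.rpow tendsto_one_div_atTop_nhds_zero_nat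
      (Or.inl (by positivity))
    simpa using this
  have hfinal : Tendsto (fun n : ℕ => l * |r n| ^ ((1 : ℝ) / n)) atTop (nhds ((5 + Real.sqrt 33) / 2)) := by
    have := hrpow.const_mul l
    simpa [hl_def] using this
  refine hfinal.congr' ?_
  filter_upwards [eventually_ge_atTop 1] with n hn
  have hn0 : (n : ℝ) ≠ 0 := Nat.cast_ne_zero.2 (by omega)
  have h2 : ((!![0, 1, 0; -3, 0, 5; -4, 0, 6] : Matrix (Fin 3) (Fin 3) ℝ) ^ n).mulVec ![0, 0, 1] 2
      = l ^ n * r n := by rw [key n, hz n]; simp [hA_def, hB_def]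
  rw [h2, abs_mul, abs_of_pos (pow_pos hl0 n),
    Real.mul_rpow (le_of_lt (pow_pos hl0 n)) (abs_nonneg _),
    ← Real.rpow_natCast l n, ← Real.rpow_mul hl0.le]
  rw [mul_one_div_cancel hn0, Real.rpow_one]
end

section
/- Let P₀ = [[2,0,0,-1,-1,0],[1,1,0,-1,-1,0],[1,0,1,-1,-1,0],[1,0,0,0,-1,0],[1,0,0,-1,0,0],[0,0,0,0,0,0]], P₁ = [[1,1,0,-1,0,-1],[0,2,0,-1,0,-1],[0,1,1,-1,0,-1],[0,1,0,0,0,-1],[0,0,0,0,0,0],[0,1,0,-1,0,0]], P₂ = [[1,0,1,0,-1,-1],[0,1,1,0,-1,-1],[0,0,2,0,-1,-1],[0,0,0,0,0,0],[0,0,1,0,0,-1],[0,0,1,0,-1,0]] be 6×6 integer matrices, with rows and columns indexed by 0, …, 5. For each j ∈ {0, 1, 2}: if d ∈ ℤ⁶ satisfies d_k ≥ d_l for all k ∈ {0, 1, 2} and all l ∈ {3, 4, 5}, then the vector d' = P_j·d also satisfies d'_k ≥ d'_l for all k ∈ {0, 1, 2} and all l ∈ {3, 4, 5}. -/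
def P0 : Matrix (Fin 6) (Fin 6) ℤ :=
  !![2, 0, 0, -1, -1, 0;
     1, 1, 0, -1, -1, 0;
     1, 0, 1, -1, -1, 0;
     1, 0, 0,  0, -1, 0;
     1, 0, 0, -1,  0, 0;
     0, 0, 0,  0,  0, 0]

def P1 : Matrix (Fin 6) (Fin 6) ℤ :=
  !![1, 1, 0, -1, 0, -1;
     0, 2, 0, -1, 0, -1;
     0, 1, 1, -1, 0, -1;
     0, 1, 0,  0, 0, -1;
     0, 0, 0,  0, 0,  0;
     0, 1, 0, -1, 0,  0]

def P2 : Matrix (Fin 6) (Fin 6) ℤ :=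
  !![1, 0, 1, 0, -1, -1;
     0, 1, 1, 0, -1, -1;
     0, 0, 2, 0, -1, -1;
     0, 0, 0, 0,  0,  0;
     0, 0, 1, 0,  0, -1;
     0, 0, 1, 0, -1,  0]


section aux

lemma cons_val_five {α : Type*} {m : ℕ} (x : α) (u : Fin (m + 5) → α) :
    Matrix.vecCons x u 5 =
      Matrix.vecHead (Matrix.vecTail (Matrix.vecTail (Matrix.vecTail (Matrix.vecTail u)))) :=
  rfl

variable (d : Fin 6 → ℤ)

lemma key_aux (v : Fin 6 → ℤ)
    (h : ∀ k l : Fin 6, (k : ℕ) < 3 → 3 ≤ (l : ℕ) → v l ≤ v k) :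
    ∀ k l : Fin 6, (k : ℕ) < 3 → 3 ≤ (l : ℕ) → v l ≤ v k := h

lemma mulVec0 : P0.mulVec d = ![2*d 0 - d 3 - d 4, d 0 + d 1 - d 3 - d 4,
    d 0 + d 2 - d 3 - d 4, d 0 - d 4, d 0 - d 3, 0] := by
  funext i
  fin_cases i <;>
    simp [P0, Matrix.mulVec, dotProduct, Fin.sum_univ_six, cons_val_five, Matrix.vecHead, Matrix.vecTail] <;> ring

lemma mulVec1 : P1.mulVec d = ![d 0 + d 1 - d 3 - d 5, 2*d 1 - d 3 - d 5,
    d 1 + d 2 - d 3 - d 5, d 1 - d 5, 0, d 1 - d 3] := by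
  funext i
  fin_cases i <;>
    simp [P1, Matrix.mulVec, dotProduct, Fin.sum_univ_six, cons_val_five, Matrix.vecHead, Matrix.vecTail] <;> ring

lemma mulVec2 : P2.mulVec d = ![d 0 + d 2 - d 4 - d 5, d 1 + d 2 - d 4 - d 5,
    2*d 2 - d 4 - d 5, 0, d 2 - d 5, d 2 - d 4] := by
  funext i
  fin_cases i <;>
    simp [P2, Matrix.mulVec, dotProduct, Fin.sum_univ_six, cons_val_five, Matrix.vecHead, Matrix.vecTail] <;> ring

end aux

/-- Each of the transition matrices `P₀, P₁, P₂` preserves the cone of integer vectors whose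
first three coordinates dominate the last three (induction step of Lemma 7.1). -/
theorem stmt_7 (P : Fin 3 → Matrix (Fin 6) (Fin 6) ℤ) (hP : P = ![P0, P1, P2]) :
    ∀ (j : Fin 3) (d : Fin 6 → ℤ),
      (∀ k l : Fin 6, (k : ℕ) < 3 → 3 ≤ (l : ℕ) → d l ≤ d k) →
      ∀ k l : Fin 6, (k : ℕ) < 3 → 3 ≤ (l : ℕ) →
        (P j).mulVec d l ≤ (P j).mulVec d k := by
  subst hP
  intro j d hd k l hk hl
  have h03 := hd 0 3 (by decide) (by decide)
  have h04 := hd 0 4 (by decide) (by decide)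
  have h05 := hd 0 5 (by decide) (by decide)
  have h13 := hd 1 3 (by decide) (by decide)
  have h14 := hd 1 4 (by decide) (by decide)
  have h15 := hd 1 5 (by decide) (by decide)
  have h23 := hd 2 3 (by decide) (by decide)
  have h24 := hd 2 4 (by decide) (by decide)
  have h25 := hd 2 5 (by decide) (by decide)
  clear hd
  fin_cases j <;>
    simp only [Matrix.cons_val_zero, Matrix.cons_val_one, Matrix.head_cons, Fin.mk_one,
      Matrix.cons_val_two, Matrix.tail_cons, Fin.zero_eta, Fin.reduceFinMk] <;>
    [rw [mulVec0]; rw [mulVec1]; rw [mulVec2]] <;>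
    fin_cases k <;> fin_cases l <;>
    simp [cons_val_five, Matrix.vecHead, Matrix.vecTail] <;> linarith
end

section
/- Let P = [[3,1,1,-3,-2,0],[2,2,1,-3,-2,0],[2,1,2,-3,-2,0],[0,0,0,0,0,0],[1,0,1,-1,-1,0],[1,1,1,-2,-1,0]] viewed as a real 6×6 matrix. Then 2 + √5 = ((1 + √5)/2)³ is an eigenvalue of P, and every complex eigenvalue μ of P satisfies |μ| ≤ 2 + √5. -/
open Matrix Polynomial

private lemma cv5 {α : Type*} : ∀ (x : α) (u : Fin 5 → α), vecCons x u 5 = u 4 :=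
  fun _ _ => rfl

private lemma one6 : (1 : Matrix (Fin 6) (Fin 6) ℂ) =
    !![1,0,0,0,0,0; 0,1,0,0,0,0; 0,0,1,0,0,0; 0,0,0,1,0,0; 0,0,0,0,1,0; 0,0,0,0,0,1] := by
  rw [← Matrix.diagonal_one]
  ext i j
  fin_cases i <;> fin_cases j <;> simp [Matrix.diagonal_apply, cv5, Matrix.vecHead, Matrix.vecTail, Function.comp]

private lemma four6 : (4 : Matrix (Fin 6) (Fin 6) ℂ) =
    !![4,0,0,0,0,0; 0,4,0,0,0,0; 0,0,4,0,0,0; 0,0,0,4,0,0; 0,0,0,0,4,0; 0,0,0,0,0,4] := by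
  rw [← Matrix.diagonal_ofNat]
  ext i j
  fin_cases i <;> fin_cases j <;> simp [Matrix.diagonal_apply, cv5, Matrix.vecHead, Matrix.vecTail, Function.comp]

set_option maxHeartbeats 1000000 in
private lemma e1' : (!![(3:ℂ), 1, 1, -3, -2, 0;
                 2, 2, 1, -3, -2, 0;
                 2, 1, 2, -3, -2, 0;
                 0, 0, 0,  0,  0, 0;
                 1, 0, 1, -1, -1, 0;
                 1, 1, 1, -2, -1, 0] : Matrix (Fin 6) (Fin 6) ℂ) *
      !![3, 1, 1, -3, -2, 0;
                 2, 2, 1, -3, -2, 0;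
                 2, 1, 2, -3, -2, 0;
                 0, 0, 0,  0,  0, 0;
                 1, 0, 1, -1, -1, 0;
                 1, 1, 1, -2, -1, 0]
    = !![11, 6, 4, -13, -8, 0;
       10, 7, 4, -13, -8, 0;
       10, 6, 5, -13, -8, 0;
       0, 0, 0, 0, 0, 0;
       4, 2, 2, -5, -3, 0;
       6, 4, 3, -8, -5, 0] := by
  ext i j
  fin_cases i <;> fin_cases j <;> norm_num [Matrix.mul_apply, Fin.sum_univ_succ, cv5, Matrix.vecHead, Matrix.vecTail, Function.comp]

set_option maxHeartbeats 1000000 in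
private lemma e2' : ((!![3, 1, 1, -3, -2, 0;
                 2, 2, 1, -3, -2, 0;
                 2, 1, 2, -3, -2, 0;
                 0, 0, 0,  0,  0, 0;
                 1, 0, 1, -1, -1, 0;
                 1, 1, 1, -2, -1, 0] : Matrix (Fin 6) (Fin 6) ℂ) -
      !![1,0,0,0,0,0; 0,1,0,0,0,0; 0,0,1,0,0,0; 0,0,0,1,0,0; 0,0,0,0,1,0; 0,0,0,0,0,1]) *
      ((!![3, 1, 1, -3, -2, 0;
                 2, 2, 1, -3, -2, 0;
                 2, 1, 2, -3, -2, 0;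
                 0, 0, 0,  0,  0, 0;
                 1, 0, 1, -1, -1, 0;
                 1, 1, 1, -2, -1, 0] : Matrix (Fin 6) (Fin 6) ℂ) -
      !![1,0,0,0,0,0; 0,1,0,0,0,0; 0,0,1,0,0,0; 0,0,0,1,0,0; 0,0,0,0,1,0; 0,0,0,0,0,1])
    = !![6, 4, 2, -7, -4, 0;
       6, 4, 2, -7, -4, 0;
       6, 4, 2, -7, -4, 0;
       0, 0, 0, 1, 0, 0;
       2, 2, 0, -3, 0, 0;
       4, 2, 1, -4, -3, 1] := by
  ext i j
  fin_cases i <;> fin_cases j <;>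
    norm_num [Matrix.mul_apply, Matrix.sub_apply, Fin.sum_univ_succ, cv5]

set_option maxHeartbeats 1000000 in
private lemma e3a : (!![(4:ℂ),0,0,0,0,0; 0,4,0,0,0,0; 0,0,4,0,0,0; 0,0,0,4,0,0; 0,0,0,0,4,0; 0,0,0,0,0,4] : Matrix (Fin 6) (Fin 6) ℂ)
        * !![3, 1, 1, -3, -2, 0;
                 2, 2, 1, -3, -2, 0;
                 2, 1, 2, -3, -2, 0;
                 0, 0, 0,  0,  0, 0;
                 1, 0, 1, -1, -1, 0;
                 1, 1, 1, -2, -1, 0]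
    = !![12, 4, 4, -12, -8, 0;
   8, 8, 4, -12, -8, 0;
   8, 4, 8, -12, -8, 0;
   0, 0, 0, 0, 0, 0;
   4, 0, 4, -4, -4, 0;
   4, 4, 4, -8, -4, 0] := by
  ext i j
  fin_cases i <;> fin_cases j <;>
    norm_num [Matrix.mul_apply, Fin.sum_univ_succ, cv5, Matrix.vecHead, Matrix.vecTail, Function.comp]

set_option maxHeartbeats 1000000 in
private lemma e3b : (!![(11:ℂ), 6, 4, -13, -8, 0;
       10, 7, 4, -13, -8, 0;
       10, 6, 5, -13, -8, 0;
       0, 0, 0, 0, 0, 0;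
       4, 2, 2, -5, -3, 0;
       6, 4, 3, -8, -5, 0] : Matrix (Fin 6) (Fin 6) ℂ)
    - !![12, 4, 4, -12, -8, 0;
   8, 8, 4, -12, -8, 0;
   8, 4, 8, -12, -8, 0;
   0, 0, 0, 0, 0, 0;
   4, 0, 4, -4, -4, 0;
   4, 4, 4, -8, -4, 0]
    - !![1,0,0,0,0,0; 0,1,0,0,0,0; 0,0,1,0,0,0; 0,0,0,1,0,0; 0,0,0,0,1,0; 0,0,0,0,0,1]
    = !![-2, 2, 0, -1, 0, 0;
       2, -2, 0, -1, 0, 0;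
       2, 2, -4, -1, 0, 0;
       0, 0, 0, -1, 0, 0;
       0, 2, -2, -1, 0, 0;
       2, 0, -1, 0, -1, -1] := by
  ext i j
  fin_cases i <;> fin_cases j <;>
    norm_num [Matrix.sub_apply, cv5]

set_option maxHeartbeats 1000000 in
private lemma e4' : (!![(11:ℂ), 6, 4, -13, -8, 0;
       10, 7, 4, -13, -8, 0;
       10, 6, 5, -13, -8, 0;
       0, 0, 0, 0, 0, 0;
       4, 2, 2, -5, -3, 0;
       6, 4, 3, -8, -5, 0] : Matrix (Fin 6) (Fin 6) ℂ) *
        !![6, 4, 2, -7, -4, 0;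
       6, 4, 2, -7, -4, 0;
       6, 4, 2, -7, -4, 0;
       0, 0, 0, 1, 0, 0;
       2, 2, 0, -3, 0, 0;
       4, 2, 1, -4, -3, 1] = !![110, 68, 42, -136, -84, 0;
       110, 68, 42, -136, -84, 0;
       110, 68, 42, -136, -84, 0;
       0, 0, 0, 0, 0, 0;
       42, 26, 16, -52, -32, 0;
       68, 42, 26, -84, -52, 0] := by
  ext i j
  fin_cases i <;> fin_cases j <;> norm_num [Matrix.mul_apply, Fin.sum_univ_succ, cv5, Matrix.vecHead, Matrix.vecTail, Function.comp]

set_option maxHeartbeats 1000000 in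
private lemma e5' : (!![(110:ℂ), 68, 42, -136, -84, 0;
       110, 68, 42, -136, -84, 0;
       110, 68, 42, -136, -84, 0;
       0, 0, 0, 0, 0, 0;
       42, 26, 16, -52, -32, 0;
       68, 42, 26, -84, -52, 0] : Matrix (Fin 6) (Fin 6) ℂ) *
        !![-2, 2, 0, -1, 0, 0;
       2, -2, 0, -1, 0, 0;
       2, 2, -4, -1, 0, 0;
       0, 0, 0, -1, 0, 0;
       0, 2, -2, -1, 0, 0;
       2, 0, -1, 0, -1, -1] = 0 := by
  ext i j
  fin_cases i <;> fin_cases j <;>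
    norm_num [Matrix.mul_apply, Matrix.zero_apply, Fin.sum_univ_succ, cv5, Matrix.vecHead, Matrix.vecTail, Function.comp]

set_option maxHeartbeats 1000000 in
private lemma hMe' : (!![3, 1, 1, -3, -2, 0;
                 2, 2, 1, -3, -2, 0;
                 2, 1, 2, -3, -2, 0;
                 0, 0, 0,  0,  0, 0;
                 1, 0, 1, -1, -1, 0;
                 1, 1, 1, -2, -1, 0] : Matrix (Fin 6) (Fin 6) ℝ).map ((↑) : ℝ → ℂ)
    = !![3, 1, 1, -3, -2, 0;
                 2, 2, 1, -3, -2, 0;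
                 2, 1, 2, -3, -2, 0;
                 0, 0, 0,  0,  0, 0;
                 1, 0, 1, -1, -1, 0;
                 1, 1, 1, -2, -1, 0] := by
  ext i j
  fin_cases i <;> fin_cases j <;> norm_num [Matrix.map_apply, cv5, Matrix.vecHead, Matrix.vecTail, Function.comp]

set_option maxHeartbeats 1000000 in
private lemma evec (s : ℝ) (h5 : s ^ 2 = 5) :
    ((s + 2) • (1 : Matrix (Fin 6) (Fin 6) ℝ) -
      !![3, 1, 1, -3, -2, 0;
                 2, 2, 1, -3, -2, 0;
                 2, 1, 2, -3, -2, 0;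
                 0, 0, 0,  0,  0, 0;
                 1, 0, 1, -1, -1, 0;
                 1, 1, 1, -2, -1, 0]) *ᵥ ![1+s, 1+s, 1+s, 0, s-1, 2] = 0 := by
  funext i
  fin_cases i <;>
    simp [Matrix.mulVec, dotProduct, Fin.sum_univ_succ,
      Matrix.one_apply, Matrix.sub_apply, Matrix.smul_apply, cv5, Matrix.vecHead, Matrix.vecTail, Function.comp] <;>
    ring_nf <;>
    linarith [h5]

/-- `2 + √5 = ((1 + √5)/2)³` is an eigenvalue of the real matrix `P = P₂·P₁·P₀`, and every
complex eigenvalue `μ` of `P` satisfies `|μ| ≤ 2 + √5`. -/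
theorem stmt_12 (P : Matrix (Fin 6) (Fin 6) ℝ)
    (hP : P = !![3, 1, 1, -3, -2, 0;
                 2, 2, 1, -3, -2, 0;
                 2, 1, 2, -3, -2, 0;
                 0, 0, 0,  0,  0, 0;
                 1, 0, 1, -1, -1, 0;
                 1, 1, 1, -2, -1, 0]) :
    2 + Real.sqrt 5 = ((1 + Real.sqrt 5) / 2) ^ 3 ∧
      (2 + Real.sqrt 5) ∈ spectrum ℝ P ∧
      ∀ μ : ℂ, μ ∈ spectrum ℂ (P.map ((↑) : ℝ → ℂ)) →
        ‖μ‖ ≤ 2 + Real.sqrt 5 := by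
  have h5 : Real.sqrt 5 ^ 2 = 5 := Real.sq_sqrt (by norm_num)
  have hs0 : (0:ℝ) ≤ Real.sqrt 5 := Real.sqrt_nonneg 5
  refine ⟨by linear_combination (-(3 + Real.sqrt 5)/8) * h5, ?_, ?_⟩
  · -- eigenvalue 2+√5
    rw [spectrum.mem_iff, Algebra.algebraMap_eq_smul_one]
    rw [Matrix.isUnit_iff_isUnit_det, isUnit_iff_ne_zero, ne_eq, not_not]
    rw [← Matrix.exists_mulVec_eq_zero_iff]
    refine ⟨![1+Real.sqrt 5, 1+Real.sqrt 5, 1+Real.sqrt 5, 0, Real.sqrt 5-1, 2],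
      ?_, ?_⟩
    · intro h
      have h0 := congrFun h 0
      simp at h0
      linarith
    · rw [hP, show (2 + Real.sqrt 5) = (Real.sqrt 5 + 2) by ring]
      exact evec _ h5
  · intro μ hμ
    rw [hP, hMe'] at hμ
    have hq : (aeval (!![3, 1, 1, -3, -2, 0;
                 2, 2, 1, -3, -2, 0;
                 2, 1, 2, -3, -2, 0;
                 0, 0, 0,  0,  0, 0;
                 1, 0, 1, -1, -1, 0;
                 1, 1, 1, -2, -1, 0] : Matrix (Fin 6) (Fin 6) ℂ))
        (X^2 * (X-1)^2 * (X^2 - 4*X - 1) : ℂ[X]) = 0 := by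
      simp only [_root_.map_mul, _root_.map_sub, _root_.map_pow, _root_.map_one,
        aeval_X, map_ofNat]
      rw [pow_two, pow_two, one6, four6, e1', e2', e3a, e3b, e4', e5']
    have key : μ^2 * (μ-1)^2 * (μ^2 - 4*μ - 1) = 0 := by
      have h1 := spectrum.subset_polynomial_aeval _
        (X^2 * (X-1)^2 * (X^2 - 4*X - 1) : ℂ[X]) ⟨μ, hμ, rfl⟩
      rw [hq, spectrum.zero_eq] at h1
      simpa using h1
    have hc5 : ((Real.sqrt 5 : ℝ) : ℂ)^2 = 5 := by
      rw [← Complex.ofReal_pow, h5]; norm_num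
    rcases mul_eq_zero.mp key with h | h
    · rcases mul_eq_zero.mp h with h | h
      · have h0 : μ = 0 := pow_eq_zero_iff (n := 2) (by norm_num) |>.mp h
        simp [h0]; positivity
      · have h1 : μ = 1 := by
          have := pow_eq_zero_iff (n := 2) (by norm_num) |>.mp h
          linear_combination this
        simp [h1]; linarith
    · have : (μ - (2 + (Real.sqrt 5 : ℂ))) * (μ - (2 - (Real.sqrt 5 : ℂ))) = 0 := by
        linear_combination h - hc5
      rcases mul_eq_zero.mp this with h' | h'
      · have hμe : μ = ((2 + Real.sqrt 5 : ℝ) : ℂ) := by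
          push_cast; linear_combination h'
        rw [hμe, Complex.norm_real, Real.norm_eq_abs, abs_of_nonneg (by linarith)]
      · have hμe : μ = ((2 - Real.sqrt 5 : ℝ) : ℂ) := by
          push_cast; linear_combination h'
        rw [hμe, Complex.norm_real, Real.norm_eq_abs, abs_le]
        constructor <;> nlinarith [h5]
end

section
/- Let P = [[3,1,1,-3,-2,0],[2,2,1,-3,-2,0],[2,1,2,-3,-2,0],[0,0,0,0,0,0],[1,0,1,-1,-1,0],[1,1,1,-2,-1,0]] be a real 6×6 matrix and e₀ = (1,0,0,0,0,0)ᵗ. Then the sequence n ↦ |(Pⁿ·e₀)₀|^{1/n}, where (Pⁿ·e₀)₀ denotes the first coordinate (index 0) of Pⁿ·e₀, converges to 2 + √5 = ((1 + √5)/2)³ as n → ∞. -/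
open Filter Matrix

private lemma vec6_ext {γ : Type*} {a0 a1 a2 a3 a4 a5 b0 b1 b2 b3 b4 b5 : γ}
    (h0 : a0 = b0) (h1 : a1 = b1) (h2 : a2 = b2) (h3 : a3 = b3) (h4 : a4 = b4)
    (h5 : a5 = b5) :
    ![a0,a1,a2,a3,a4,a5] = ![b0,b1,b2,b3,b4,b5] := by
  subst h0 h1 h2 h3 h4 h5; rfl

private lemma vec6_at0 {α : Type*} (a b c d e f : α) : ![a,b,c,d,e,f] 0 = a := rfl
private lemma vec6_at1 {α : Type*} (a b c d e f : α) : ![a,b,c,d,e,f] 1 = b := rfl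
private lemma vec6_at2 {α : Type*} (a b c d e f : α) : ![a,b,c,d,e,f] 2 = c := rfl
private lemma vec6_at3 {α : Type*} (a b c d e f : α) : ![a,b,c,d,e,f] 3 = d := rfl
private lemma vec6_at4 {α : Type*} (a b c d e f : α) : ![a,b,c,d,e,f] 4 = e := rfl
private lemma vec6_at5 {α : Type*} (a b c d e f : α) : ![a,b,c,d,e,f] 5 = f := rfl

/-- The exponential growth rate of the first coordinate (index `0`) of `Pⁿ·e₀` for
`P = P₂·P₁·P₀` and `e₀ = (1,0,0,0,0,0)ᵗ` is the dominant eigenvalue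
`2 + √5 = ((1 + √5)/2)³`. -/
theorem stmt_13 (P : Matrix (Fin 6) (Fin 6) ℝ)
    (hP : P = !![3, 1, 1, -3, -2, 0;
                 2, 2, 1, -3, -2, 0;
                 2, 1, 2, -3, -2, 0;
                 0, 0, 0,  0,  0, 0;
                 1, 0, 1, -1, -1, 0;
                 1, 1, 1, -2, -1, 0])
    (e0 : Fin 6 → ℝ) (he0 : e0 = ![1, 0, 0, 0, 0, 0]) :
    Tendsto (fun n : ℕ => |((P ^ n).mulVec e0) 0| ^ ((1 : ℝ) / n))
      atTop (nhds (2 + Real.sqrt 5)) ∧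
      2 + Real.sqrt 5 = ((1 + Real.sqrt 5) / 2) ^ 3 := by
  subst hP he0
  set s : ℝ := Real.sqrt 5 with hs
  have hs0 : (0:ℝ) ≤ s := Real.sqrt_nonneg 5
  have hs2 : s ^ 2 = 5 := Real.sq_sqrt (by norm_num)
  have hs_lb : 2 < s := by nlinarith
  have hs_ub : s < 3 := by nlinarith
  set α : ℝ := 2 + s with hα
  set β : ℝ := 2 - s with hβ
  set A : ℝ := (5 + 3*s)/20 with hA
  set B : ℝ := (5 - 3*s)/20 with hB
  set C : ℝ := s/10 with hC
  have hαpos : 0 < α := by simp only [hα]; linarith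
  set a : ℕ → ℝ := fun n => A * α ^ n + B * β ^ n + 1/2 with ha
  set b : ℕ → ℝ := fun n => C * α ^ n - C * β ^ n with hb
  clear_value b a C B A β α s
  -- key closed form for the full vector
  have key : ∀ n : ℕ,
      ((!![3, 1, 1, -3, -2, 0;
           2, 2, 1, -3, -2, 0;
           2, 1, 2, -3, -2, 0;
           0, 0, 0,  0,  0, 0;
           1, 0, 1, -1, -1, 0;
           1, 1, 1, -2, -1, 0] : Matrix (Fin 6) (Fin 6) ℝ) ^ n).mulVec
        ![1, 0, 0, 0, 0, 0] =
      ![a n, a n - 1, a n - 1, 0, b n, a n - 1 - b n] := by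
    intro n
    induction n with
    | zero =>
      rw [pow_zero, Matrix.one_mulVec]
      simp only [ha, hb]
      apply vec6_ext <;>
        simp only [hA, hB, hC, hα, hβ, pow_zero] <;>
        ring
    | succ n ih =>
      rw [pow_succ', ← Matrix.mulVec_mulVec, ih]
      simp only [Matrix.cons_mulVec, Matrix.cons_dotProduct, Matrix.dotProduct_of_isEmpty,
        Matrix.empty_mulVec, Matrix.head_cons, Matrix.tail_cons, ha, hb]
      apply vec6_ext <;>
        simp only [hA, hB, hC, hα, hβ, pow_succ] <;>
        first
          | ring1
          | linear_combination (-(3:ℝ)/20 * ((2+s)^n + (2-s)^n)) * hs2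
          | linear_combination (-(1:ℝ)/10 * ((2+s)^n + (2-s)^n)) * hs2
          | linear_combination (-(1:ℝ)/20 * ((2+s)^n + (2-s)^n)) * hs2
  constructor
  · have hcoord : ∀ n : ℕ,
        ((!![3, 1, 1, -3, -2, 0;
             2, 2, 1, -3, -2, 0;
             2, 1, 2, -3, -2, 0;
             0, 0, 0,  0,  0, 0;
             1, 0, 1, -1, -1, 0;
             1, 1, 1, -2, -1, 0] : Matrix (Fin 6) (Fin 6) ℝ) ^ n).mulVec
          ![1, 0, 0, 0, 0, 0] 0 = a n := by
      intro n; rw [key n]; rfl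
    simp only [hcoord]
    set c : ℕ → ℝ := fun n => A + B * (β/α) ^ n + (1/2) * (α⁻¹) ^ n with hc
    have hac : ∀ n, a n = α ^ n * c n := by
      intro n
      simp only [ha, hc, div_pow, inv_pow]
      have hαn : α ^ n ≠ 0 := ne_of_gt (pow_pos hαpos n)
      field_simp
    have hAp : (0:ℝ) < A := by simp only [hA]; linarith
    have h1 : Tendsto (fun n : ℕ => (β/α) ^ n) atTop (nhds 0) := by
      apply tendsto_pow_atTop_nhds_zero_of_abs_lt_one
      rw [abs_div, div_lt_one (by rwa [abs_of_pos hαpos])]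
      rw [abs_of_pos hαpos, abs_lt]
      constructor <;> simp only [hβ, hα] <;> linarith
    have h2 : Tendsto (fun n : ℕ => (α⁻¹) ^ n) atTop (nhds 0) := by
      apply tendsto_pow_atTop_nhds_zero_of_abs_lt_one
      rw [abs_of_pos (inv_pos.mpr hαpos), inv_lt_one_iff₀]
      right; simp only [hα]; linarith
    have hclim : Tendsto c atTop (nhds A) := by
      rw [hc]
      have h := ((tendsto_const_nhds (x := A)).add (h1.const_mul B)).add
        (h2.const_mul (1/2 : ℝ))
      simpa using h
    have habslim : Tendsto (fun n => |c n|) atTop (nhds |A|) := hclim.abs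
    rw [abs_of_pos hAp] at habslim
    have hexp : Tendsto (fun n : ℕ => (1:ℝ)/n) atTop (nhds 0) :=
      tendsto_one_div_atTop_nhds_zero_nat
    have hroot : Tendsto (fun n : ℕ => |c n| ^ ((1:ℝ)/n)) atTop (nhds 1) := by
      have := habslim.rpow hexp (Or.inl (ne_of_gt hAp))
      simpa using this
    have hfinal := hroot.const_mul α
    rw [mul_one] at hfinal
    apply hfinal.congr'
    filter_upwards [eventually_ge_atTop 1] with n hn
    have hn0 : (n:ℝ) ≠ 0 := Nat.cast_ne_zero.mpr (by omega)
    rw [hac n, abs_mul, abs_of_pos (pow_pos hαpos n),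
      Real.mul_rpow (le_of_lt (pow_pos hαpos n)) (abs_nonneg _),
      ← Real.rpow_natCast α n, ← Real.rpow_mul (le_of_lt hαpos)]
    rw [show (n : ℝ) * ((1:ℝ)/n) = 1 by field_simp, Real.rpow_one]
  · rw [hα]
    linear_combination (-(s+3)/8) * hs2
end

section
/- Let q ∈ ℂ[X₁, …, X₅] be homogeneous of degree 2 and c ∈ ℂ[X₁, …, X₅] homogeneous of degree 3 (both not involving X₀), and let F = X₁·X₀² + X₀·q + c ∈ ℂ[X₀, …, X₅]. Define the six polynomials σ₀ = X₀X₁ + q, σ₁ = −X₁², σ₂ = −X₁X₂, σ₃ = −X₁X₃, σ₄ = −X₁X₄, σ₅ = −X₁X₅. Then substituting (σ₀, …, σ₅) for (X₀, …, X₅) in F yields the polynomial identity F(σ₀, …, σ₅) = −X₁³ · F. -/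
open MvPolynomial


lemma aux_scale {n : ℕ} {p : MvPolynomial (Fin 6) ℂ} (hp : p.IsHomogeneous n)
    (r : MvPolynomial (Fin 6) ℂ) :
    aeval (fun i => r * X i) p = r ^ n * p := by
  have key : ∀ d ∈ p.support, aeval (fun i => r * X i) (monomial d (coeff d p))
      = r ^ n * monomial d (coeff d p) := by
    intro d hd
    have hdeg : (∑ i ∈ d.support, d i) = n := by
      have := hp (Finsupp.mem_support_iff.mp hd)
      simpa [Finsupp.weight, Finsupp.linearCombination, Finsupp.sum] using this
    rw [aeval_monomial, algebraMap_eq, monomial_eq]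
    have : (d.prod fun i k => (r * X i) ^ k)
        = r ^ n * d.prod fun i k => (X i : MvPolynomial (Fin 6) ℂ) ^ k := by
      rw [Finsupp.prod, Finsupp.prod]
      simp only [mul_pow]
      rw [Finset.prod_mul_distrib, Finset.prod_pow_eq_pow_sum, hdeg]
    rw [this]; ring
  calc aeval (fun i => r * X i) p
      = ∑ d ∈ p.support, aeval (fun i => r * X i) (monomial d (coeff d p)) := by
        conv_lhs => rw [p.as_sum]
        rw [map_sum]
    _ = ∑ d ∈ p.support, r ^ n * monomial d (coeff d p) := Finset.sum_congr rfl key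
    _ = r ^ n * p := by rw [← Finset.mul_sum, ← p.as_sum]

lemma aux_congr {q p : MvPolynomial (Fin 6) ℂ} (hpv : (0 : Fin 6) ∉ p.vars)
    (σ : Fin 6 → MvPolynomial (Fin 6) ℂ)
    (hσ : σ = ![X 0 * X 1 + q, -(X 1 ^ 2), -(X 1 * X 2), -(X 1 * X 3),
                -(X 1 * X 4), -(X 1 * X 5)]) :
    aeval σ p = aeval (fun i => (-(X 1)) * X i) p := by
  rw [aeval_def, aeval_def]
  apply eval₂_congr
  intro i d hid hcd
  have hiv : i ∈ p.vars := (mem_vars i).mpr ⟨d, Finsupp.mem_support_iff.mpr hcd, hid⟩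
  have hi0 : i ≠ 0 := fun h => hpv (h ▸ hiv)
  subst hσ
  fin_cases i
  · exact absurd rfl hi0
  all_goals norm_num [Matrix.cons_val_zero, Matrix.cons_val_one, Matrix.head_cons,
    Matrix.cons_val_succ] <;> first | rfl | ring

/-- The reflection `σ_p` of a cubic fourfold `{F = 0}` with
`F = X₁X₀² + X₀q + c` (where `q`, `c` are homogeneous of degrees 2 and 3 in `X₁,…,X₅`)
satisfies the polynomial identity `F(σ₀,…,σ₅) = −X₁³·F`, i.e. `σ_p` maps `X` to itself. -/
theorem stmt_15 (q c : MvPolynomial (Fin 6) ℂ)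
    (hq : q.IsHomogeneous 2) (hc : c.IsHomogeneous 3)
    (hqv : (0 : Fin 6) ∉ q.vars) (hcv : (0 : Fin 6) ∉ c.vars)
    (F : MvPolynomial (Fin 6) ℂ) (hF : F = X 1 * X 0 ^ 2 + X 0 * q + c)
    (σ : Fin 6 → MvPolynomial (Fin 6) ℂ)
    (hσ : σ = ![X 0 * X 1 + q, -(X 1 ^ 2), -(X 1 * X 2), -(X 1 * X 3),
                -(X 1 * X 4), -(X 1 * X 5)]) :
    aeval σ F = -(X 1) ^ 3 * F := by
  have hq2 : aeval σ q = (-(X 1)) ^ 2 * q := by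
    rw [aux_congr hqv σ hσ, aux_scale hq]
  have hc3 : aeval σ c = (-(X 1)) ^ 3 * c := by
    rw [aux_congr hcv σ hσ, aux_scale hc]
  have h0 : σ 0 = X 0 * X 1 + q := by rw [hσ]; rfl
  have h1 : σ 1 = -(X 1 ^ 2) := by rw [hσ]; rfl
  rw [hF]
  simp only [map_add, map_mul, map_pow, aeval_X, hq2, hc3, h0, h1]
  ring
end

section
/- Let E be an abelian group and N ≥ 2 an even integer. Let p₁, …, p_N ∈ E be ℤ-linearly independent, i.e. the only integers c₁, …, c_N with c₁p₁ + ⋯ + c_Np_N = 0 are c₁ = ⋯ = c_N = 0. For x ∈ E define σ_x : E → E by σ_x(y) = −x − y. Define the sequence y₀ = p₁ and y_k = σ_{p_{1 + (k mod N)}}(y_{k−1}) for k ≥ 1 (so the maps σ_{p₂}, σ_{p₃}, …, σ_{p_N}, σ_{p₁}, σ_{p₂}, … are applied cyclically in this order). Then y_k ≠ p₁ for all k ≥ 1. -/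
/-- Coefficient sequence mirroring the recursion `y (k+1) = -p ((k+1)%N) - y k`. -/
def stmt17c (N : ℕ) : ℕ → Fin N → ℤ
  | 0 => fun i => if i.val = 0 then 1 else 0
  | (k+1) => fun i => -stmt17c N k i - (if i.val = (k + 1) % N then 1 else 0)

theorem stmt17_sign (N : ℕ) (hN : 2 ≤ N) (hNeven : Even N) (h1 : 1 < N) :
    ∀ k : ℕ, 1 ≤ k → 1 ≤ (-1 : ℤ)^k * stmt17c N k ⟨1, h1⟩ := by
  intro k hk
  induction k with
  | zero => omega
  | succ k ih =>
    rcases Nat.eq_or_lt_of_le hk with h | h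
    · -- k + 1 = 1
      have hk0 : k = 0 := by omega
      subst hk0
      have : (1 : ℕ) % N = 1 := Nat.mod_eq_of_lt h1
      simp [stmt17c, this]
    · have hk1 : 1 ≤ k := by omega
      have ihk := ih hk1
      show 1 ≤ (-1 : ℤ)^(k+1) * (-stmt17c N k ⟨1, h1⟩ -
        (if (1 : ℕ) = (k + 1) % N then 1 else 0))
      by_cases hc : (1 : ℕ) = (k + 1) % N
      · -- then k+1 is odd, k even
        have h2N : 2 ∣ N := hNeven.two_dvd
        have : (k + 1) % 2 = 1 := by
          have := Nat.mod_mod_of_dvd (k + 1) h2N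
          omega
        have hkeven : Even k := by
          rcases Nat.even_or_odd k with he | ho
          · exact he
          · exfalso; rcases ho with ⟨m, hm⟩; omega
        have hpow : (-1 : ℤ)^k = 1 := hkeven.neg_one_pow
        have hpow1 : (-1 : ℤ)^(k+1) = -1 := by
          rw [pow_succ, hpow]; ring
        rw [if_pos hc, hpow1]
        have : (-1 : ℤ)^k * stmt17c N k ⟨1, h1⟩ = stmt17c N k ⟨1, h1⟩ := by
          rw [hpow, one_mul]
        nlinarith [ihk]
      · rw [if_neg hc]
        have : (-1 : ℤ)^(k+1) = -((-1:ℤ)^k) := by rw [pow_succ]; ring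
        rw [this]
        nlinarith [ihk]

/-- On an elliptic curve, for `N ≥ 2` even and `ℤ`-linearly independent points `p₁,…,p_N`,
the orbit of `p₁` under the cyclic composition of the reflections `σ_x(y) = −x−y`
(applied in the order `σ_{p₂}, σ_{p₃}, …, σ_{p_N}, σ_{p₁}, σ_{p₂}, …`) never returns
to `p₁`. -/
theorem stmt_17 (E : Type*) [AddCommGroup E] (N : ℕ) (hN : 2 ≤ N) (hNeven : Even N)
    (p : Fin N → E)
    (hindep : ∀ c : Fin N → ℤ, ∑ i, c i • p i = 0 → ∀ i, c i = 0)
    (y : ℕ → E) (hy0 : y 0 = p ⟨0, by omega⟩)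
    (hy : ∀ k : ℕ, y (k + 1) = -p ⟨(k + 1) % N, Nat.mod_lt _ (by omega)⟩ - y k) :
    ∀ k : ℕ, 1 ≤ k → y k ≠ p ⟨0, by omega⟩ := by
  have h1 : 1 < N := by omega
  -- indicator sums
  have hind : ∀ m : ℕ, ∀ hm : m < N,
      (∑ i : Fin N, (if (i : Fin N).val = m then (1:ℤ) else 0) • p i) = p ⟨m, hm⟩ := by
    intro m hm
    have : ∀ i : Fin N, ((if (i : Fin N).val = m then (1:ℤ) else 0) • p i)
        = if i = ⟨m, hm⟩ then p i else 0 := by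
      intro i
      by_cases h : i = ⟨m, hm⟩
      · subst h; simp
      · have : i.val ≠ m := fun hv => h (Fin.ext hv)
        simp [this, h]
    rw [Finset.sum_congr rfl (fun i _ => this i)]
    simp
  -- closed form
  have hclosed : ∀ k : ℕ, y k = ∑ i : Fin N, stmt17c N k i • p i := by
    intro k
    induction k with
    | zero =>
      rw [hy0]
      exact (hind 0 (by omega)).symm
    | succ k ih =>
      rw [hy k, ih]
      have : ∀ i : Fin N, stmt17c N (k+1) i • p i
          = -(stmt17c N k i • p i) - (if (i : Fin N).val = (k+1) % N then (1:ℤ) else 0) • p i := by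
        intro i
        show (-stmt17c N k i - (if i.val = (k + 1) % N then 1 else 0)) • p i = _
        rw [sub_smul, neg_smul]
      rw [Finset.sum_congr rfl (fun i _ => this i), Finset.sum_sub_distrib,
        Finset.sum_neg_distrib, hind ((k+1) % N) (Nat.mod_lt _ (by omega))]
      abel
  intro k hk hcontra
  -- derive linear relation
  have hrel : ∑ i : Fin N, (stmt17c N k i - (if (i : Fin N).val = 0 then 1 else 0)) • p i = 0 := by
    have : ∀ i : Fin N, (stmt17c N k i - (if (i : Fin N).val = 0 then (1:ℤ) else 0)) • p i
        = stmt17c N k i • p i - (if (i : Fin N).val = 0 then (1:ℤ) else 0) • p i := by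
      intro i; rw [sub_smul]
    rw [Finset.sum_congr rfl (fun i _ => this i), Finset.sum_sub_distrib,
      ← hclosed k, hind 0 (by omega), hcontra, sub_self]
  have hzero := hindep _ hrel ⟨1, h1⟩
  have hz : stmt17c N k ⟨1, h1⟩ = 0 := by
    simpa using hzero
  have hsign := stmt17_sign N hN hNeven h1 k hk
  rw [hz, mul_zero] at hsign
  omega
end

section
/- Let E be an abelian group and N ≥ 3 an odd integer. Let p₁, …, p_N ∈ E be ℤ-linearly independent, i.e. the only integers c₁, …, c_N with c₁p₁ + ⋯ + c_Np_N = 0 are c₁ = ⋯ = c_N = 0. For x ∈ E define σ_x : E → E by σ_x(y) = −x − y. Define the sequence y₀ = p₁ and y_k = σ_{p_{1 + (k mod N)}}(y_{k−1}) for k ≥ 1 (so the maps σ_{p₂}, σ_{p₃}, …, σ_{p_N}, σ_{p₁}, σ_{p₂}, … are applied cyclically in this order). Then y_{2N} = p₁ (i.e. p₁ is mapped back to itself after applying σ_{p₁}∘(σ_{p_N}∘⋯∘σ_{p₁})∘(σ_{p_N}∘⋯∘σ_{p₂})), and for every k with 1 ≤ k ≤ 2N − 1, the element y_k is not equal to any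 of p₁, …, p_N. -/
/-- Coefficient of `p r` in `y k` (valid for `k ≤ 2N`). -/
def coefC (N k r : ℕ) : ℤ :=
  if r = 0 then (if k < N then (-1)^k else if k < 2*N then 2*(-1)^k else 1)
  else if r ≤ k ∧ k < r + N then (-1)^(k+1+r) else 0

lemma coef_rec (N k r : ℕ) (hNodd : Odd N) (hN : 3 ≤ N) (hr : r < N) (hk : k + 1 ≤ 2*N) :
    coefC N (k+1) r = (if r = (k+1) % N then (-1 : ℤ) else 0) - coefC N k r := by
  obtain ⟨t, ht⟩ := hNodd
  obtain ⟨m, hmdef⟩ : ∃ m, (k+1) % N = m := ⟨_, rfl⟩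
  obtain ⟨q, hqdef⟩ : ∃ q, (k+1) / N = q := ⟨_, rfl⟩
  have hq := Nat.div_add_mod (k+1) N
  have hm := Nat.mod_lt (k+1) (show 0 < N by omega)
  rw [hmdef] at hm
  rw [hmdef, hqdef] at hq
  have hdle : q ≤ 2 := by
    have h2 : (k+1) / N < 3 := Nat.div_lt_of_lt_mul (by omega)
    omega
  have hqc : q = 0 ∨ q = 1 ∨ q = 2 := by omega
  rcases hqc with hqc | hqc | hqc <;> rw [hqc] at hq
  all_goals {
    by_cases hr0 : r = 0
    · subst hr0
      by_cases hA : k + 1 < N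
      · rw [coefC, coefC, if_pos rfl, if_pos rfl, if_pos hA, if_pos (by omega : k < N),
          if_neg (by rw [hmdef]; omega : ¬ (0 = (k+1) % N))]
        rw [pow_succ]; ring
      · by_cases hB : k + 1 = N
        · have hke : Even k := Nat.even_iff.mpr (by omega)
          rw [coefC, coefC, if_pos rfl, if_pos rfl, if_neg (by omega : ¬ k + 1 < N),
            if_pos (by omega : k + 1 < 2*N), if_pos (by omega : k < N),
            if_pos (by rw [hmdef]; omega : 0 = (k+1) % N), hke.neg_one_pow, pow_succ, hke.neg_one_pow]
          ring
        · by_cases hC : k + 1 < 2*N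
          · rw [coefC, coefC, if_pos rfl, if_pos rfl, if_neg (by omega : ¬ k + 1 < N),
              if_pos hC, if_neg (by omega : ¬ k < N), if_pos (by omega : k < 2*N),
              if_neg (by rw [hmdef]; omega : ¬ (0 = (k+1) % N)), pow_succ]
            ring
          · have hko : Odd k := Nat.odd_iff.mpr (by omega)
            rw [coefC, coefC, if_pos rfl, if_pos rfl, if_neg (by omega : ¬ k + 1 < N),
              if_neg (by omega : ¬ k + 1 < 2*N), if_neg (by omega : ¬ k < N),
              if_pos (by omega : k < 2*N), if_pos (by rw [hmdef]; omega : 0 = (k+1) % N),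
              hko.neg_one_pow]
            ring
    · by_cases hE : k + 1 = r
      · have h1 : Odd ((k+1)+1+r) := ⟨r, by omega⟩
        rw [coefC, coefC, if_neg hr0, if_neg hr0,
          if_pos (by omega : r ≤ k + 1 ∧ k + 1 < r + N),
          if_neg (by omega : ¬ (r ≤ k ∧ k < r + N)),
          if_pos (by rw [hmdef]; omega : r = (k+1) % N), h1.neg_one_pow]
        ring
      · by_cases hF : k + 1 = r + N
        · have h1 : Odd (k+1+r) := ⟨r + t, by omega⟩
          rw [coefC, coefC, if_neg hr0, if_neg hr0,
            if_neg (by omega : ¬ (r ≤ k + 1 ∧ k + 1 < r + N)),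
            if_pos (by omega : r ≤ k ∧ k < r + N),
            if_pos (by rw [hmdef]; omega : r = (k+1) % N), h1.neg_one_pow]
          ring
        · by_cases hG : r ≤ k ∧ k < r + N
          · rw [coefC, coefC, if_neg hr0, if_neg hr0,
              if_pos (by omega : r ≤ k + 1 ∧ k + 1 < r + N), if_pos hG,
              if_neg (by rw [hmdef]; omega : ¬ (r = (k+1) % N)),
              show k + 1 + 1 + r = (k + 1 + r) + 1 by omega, pow_succ]
            ring
          · rw [coefC, coefC, if_neg hr0, if_neg hr0,
              if_neg (by omega : ¬ (r ≤ k + 1 ∧ k + 1 < r + N)), if_neg hG,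
              if_neg (by rw [hmdef]; omega : ¬ (r = (k+1) % N))]
            ring
  }

/-- On an elliptic curve, for `N ≥ 3` odd and `ℤ`-linearly independent points `p₁,…,p_N`,
the orbit of `p₁` under the cyclic composition of the reflections `σ_x(y) = −x−y`
(applied in the order `σ_{p₂}, σ_{p₃}, …, σ_{p_N}, σ_{p₁}, σ_{p₂}, …`) returns to `p₁`
exactly after `2N` steps, and no intermediate element of the orbit equals any of the `pᵢ`. -/
theorem stmt_18 (E : Type*) [AddCommGroup E] (N : ℕ) (hN : 3 ≤ N) (hNodd : Odd N)
    (p : Fin N → E)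
    (hindep : ∀ c : Fin N → ℤ, ∑ i, c i • p i = 0 → ∀ i, c i = 0)
    (y : ℕ → E) (hy0 : y 0 = p ⟨0, by omega⟩)
    (hy : ∀ k : ℕ, y (k + 1) = -p ⟨(k + 1) % N, Nat.mod_lt _ (by omega)⟩ - y k) :
    y (2 * N) = p ⟨0, by omega⟩ ∧
      ∀ k : ℕ, 1 ≤ k → k ≤ 2 * N - 1 → ∀ i : Fin N, y k ≠ p i := by
  have hN0 : 0 < N := by omega
  -- main invariant
  have key : ∀ k, k ≤ 2*N → y k = ∑ i : Fin N, coefC N k (i : ℕ) • p i := by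
    intro k
    induction k with
    | zero =>
      intro _
      rw [hy0]
      rw [Finset.sum_eq_single (⟨0, hN0⟩ : Fin N)]
      · simp [coefC, hN0]
      · intro b _ hb
        have hb0 : (b : ℕ) ≠ 0 := by
          intro h; exact hb (Fin.ext h)
        simp [coefC, hb0]
      · simp
    | succ k ih =>
      intro hk
      rw [hy k, ih (by omega)]
      have hrec : ∀ i : Fin N, coefC N (k+1) (i : ℕ) • p i
          = ((if (i : ℕ) = (k+1) % N then (-1 : ℤ) else 0) • p i) - coefC N k (i : ℕ) • p i := by
        intro i
        rw [coef_rec N k (i : ℕ) hNodd hN i.isLt hk, sub_smul]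
      rw [Finset.sum_congr rfl (fun i _ => hrec i), Finset.sum_sub_distrib]
      have hsingle : ∑ i : Fin N, (if (i : ℕ) = (k+1) % N then (-1 : ℤ) else 0) • p i
          = -p ⟨(k+1) % N, Nat.mod_lt _ hN0⟩ := by
        rw [Finset.sum_eq_single (⟨(k+1) % N, Nat.mod_lt _ hN0⟩ : Fin N)]
        · simp
        · intro b _ hb
          have : (b : ℕ) ≠ (k+1) % N := by
            intro h; exact hb (Fin.ext h)
          simp [this]
        · simp
      rw [hsingle]
  constructor
  · -- y (2N) = p 0
    rw [key (2*N) le_rfl]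
    rw [Finset.sum_eq_single (⟨0, hN0⟩ : Fin N)]
    · simp [coefC, show ¬ 2*N < N by omega, show ¬ 2*N < 2*N by omega]
    · intro b _ hb
      have hb0 : (b : ℕ) ≠ 0 := by intro h; exact hb (Fin.ext h)
      have hbN := b.isLt
      have : ¬ ((b : ℕ) ≤ 2*N ∧ 2*N < (b : ℕ) + N) := by omega
      simp [coefC, hb0, this]
    · simp
  · intro k hk1 hk2 i hyk
    -- derive that all coefficients match the delta at i
    have hsum : ∑ r : Fin N, (coefC N k (r : ℕ) - if r = i then 1 else 0) • p r = 0 := by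
      have h1 : ∑ r : Fin N, (if r = i then (1:ℤ) else 0) • p r = p i := by
        rw [Finset.sum_eq_single i]
        · simp
        · intro b _ hb; simp [hb]
        · simp
      have h2 := key k (by omega)
      calc ∑ r : Fin N, (coefC N k (r : ℕ) - if r = i then 1 else 0) • p r
          = (∑ r : Fin N, coefC N k (r : ℕ) • p r)
            - ∑ r : Fin N, (if r = i then (1:ℤ) else 0) • p r := by
            rw [← Finset.sum_sub_distrib]
            exact Finset.sum_congr rfl (fun r _ => by rw [sub_smul])
        _ = y k - p i := by rw [← h2, h1]
        _ = 0 := by rw [hyk, sub_self]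
    have hall := hindep _ hsum
    by_cases hkN : k < N
    · -- coefficient at r = k is -1
      have hko : Odd (k + 1 + k) := ⟨k, by omega⟩
      have hv : coefC N k k = -1 := by
        rw [coefC, if_neg (by omega : ¬ k = 0),
          if_pos (by omega : k ≤ k ∧ k < k + N), hko.neg_one_pow]
      have := hall ⟨k, hkN⟩
      rw [hv] at this
      split_ifs at this <;> omega
    · -- coefficient at r = 0 is ±2
      have hv : coefC N k 0 = 2 * (-1)^k := by
        rw [coefC, if_pos rfl, if_neg hkN, if_pos (by omega : k < 2*N)]
      have := hall ⟨0, hN0⟩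
      rw [hv] at this
      rcases Nat.even_or_odd k with hke | hke
      · rw [hke.neg_one_pow] at this
        split_ifs at this <;> omega
      · rw [hke.neg_one_pow] at this
        split_ifs at this <;> omega
end
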